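/- Let X be a complex topological vector space, C a continuous linear operator on X with dense range, and (S(z))_{z ∈ ℂ} an entire C-regularized group of operators on X. If x ∈ X is a diskcyclic vector for the set {S(z) : z ∈ ℂ}, then C x is also a diskcyclic vector for {S(z) : z ∈ ℂ}. -/

import Mathlib

/-- If `(S z)_{z ∈ ℂ}` is an entire `C`-regularized group of operators on a complex
topological vector space, where `C` has dense range, then `C` maps every diskcyclic
vector of `{S z : z ∈ ℂ}` to a diskcyclic vector of `{S z : z ∈ ℂ}`. -/
theorem stmt_17 {X : Type*} [AddCommGroup X] [Module ℂ X] [TopologicalSpace X]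
    [IsTopologicalAddGroup X] [ContinuousSMul ℂ X]
    (C : X →L[ℂ] X) (hC : DenseRange ⇑C)
    (S : ℂ → X →L[ℂ] X)
    (hS0 : S 0 = C)
    (hSadd : ∀ z w : ℂ, S (z + w) ∘L C = S z ∘L S w)
    (hSent : ∀ (x : X) (f : X →L[ℂ] ℂ), Differentiable ℂ fun z : ℂ => f (S z x))
    (x : X) (hx : Dense {y : X | ∃ α : ℂ, ‖α‖ ≤ 1 ∧ ∃ z : ℂ, y = α • S z x}) :
    Dense {y : X | ∃ α : ℂ, ‖α‖ ≤ 1 ∧ ∃ z : ℂ, y = α • S z (C x)} := by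
  have hcomm : ∀ z : ℂ, S z (C x) = C (S z x) := by
    intro z
    have h := hSadd 0 z
    rw [zero_add, hS0] at h
    have := congrArg (fun T : X →L[ℂ] X => T x) h
    simpa using this
  have himg : {y : X | ∃ α : ℂ, ‖α‖ ≤ 1 ∧ ∃ z : ℂ, y = α • S z (C x)}
      = C '' {y : X | ∃ α : ℂ, ‖α‖ ≤ 1 ∧ ∃ z : ℂ, y = α • S z x} := by
    ext y
    constructor
    · rintro ⟨α, hα, z, rfl⟩
      exact ⟨α • S z x, ⟨α, hα, z, rfl⟩, by simp [hcomm z]⟩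
    · rintro ⟨w, ⟨α, hα, z, rfl⟩, rfl⟩
      exact ⟨α, hα, z, by simp [hcomm z]⟩
  rw [himg]
  exact hC.dense_image C.continuous hx
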